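/- Let S be a finite nonempty type. Let P, Q, and P̂ be row-stochastic S × S real matrices (all entries nonnegative and each row summing to 1), let μ be a stationary distribution of P and ν a stationary distribution of Q, and let δ : S → ℝ be nonnegative with ∑_{s'} |P(s,s') − P̂(s,s')| ≤ δ(s) and ∑_{s'} |Q(s,s') − P̂(s,s')| ≤ δ(s) for every s. Let C ≥ 1 and 0 < ρ < 1 be reals such that for every probability vector λ on S and every integer t ≥ 1, ∑_s |(λPᵗ)(s) − μ(s)| ≤ C·ρᵗ, and set n̂ := ⌈log C / log(1/ρ)⌉. Then for every function f : S → ℝ with 0 ≤ f(s) ≤ 1 for all s, |∑_s μ(s)·f(s) − ∑_s ν(s)·f(s)| ≤ 2·(n̂ + C·ρ^{n̂}/(1 − ρ)) · max_s δ(s). -/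

import Mathlib

lemma stoch_pow {S} [Fintype S] [DecidableEq S] (P : Matrix S S ℝ)
    (h0 : ∀ s s', 0 ≤ P s s') (h1 : ∀ s, ∑ s', P s s' = 1) (t : ℕ) :
    (∀ s s', 0 ≤ (P ^ t) s s') ∧ (∀ s, ∑ s', (P ^ t) s s' = 1) := by
  induction t with
  | zero =>
    constructor <;> intro s <;> simp [Matrix.one_apply]
    · intro s'; positivity
  | succ t ih =>
    rw [pow_succ]
    constructor
    · intro s s'
      exact Finset.sum_nonneg fun k _ => mul_nonneg (ih.1 s k) (h0 k s')
    · intro s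
      simp only [Matrix.mul_apply]
      rw [Finset.sum_comm]
      simp [← Finset.mul_sum, h1, ih.2]

lemma vecMul_sum_eq {S} [Fintype S] (w : S → ℝ) (A : Matrix S S ℝ)
    (h1 : ∀ s, ∑ s', A s s' = 1) :
    ∑ s', Matrix.vecMul w A s' = ∑ s, w s := by
  simp only [Matrix.vecMul, dotProduct]
  rw [Finset.sum_comm]
  simp [← Finset.mul_sum, h1]

lemma vecMul_l1 {S} [Fintype S] (w : S → ℝ) (A : Matrix S S ℝ)
    (h0 : ∀ s s', 0 ≤ A s s') (h1 : ∀ s, ∑ s', A s s' = 1) :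
    ∑ s', |Matrix.vecMul w A s'| ≤ ∑ s, |w s| := by
  simp only [Matrix.vecMul, dotProduct]
  calc ∑ s', |∑ s, w s * A s s'| ≤ ∑ s', ∑ s, |w s| * A s s' := by
        refine Finset.sum_le_sum fun s' _ => ?_
        refine (Finset.abs_sum_le_sum_abs _ _).trans (le_of_eq ?_)
        refine Finset.sum_congr rfl fun s _ => ?_
        rw [abs_mul, abs_of_nonneg (h0 s s')]
    _ = ∑ s, |w s| := by rw [Finset.sum_comm]; simp [← Finset.mul_sum, h1]
open Finset
lemma signed_mix {S} [Fintype S] [DecidableEq S] (P : Matrix S S ℝ) (μ : S → ℝ) (C ρ : ℝ)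
    (hmix : ∀ l : S → ℝ, (∀ s, 0 ≤ l s) → ∑ s, l s = 1 →
      ∀ t : ℕ, 1 ≤ t → ∑ s, |Matrix.vecMul l (P ^ t) s - μ s| ≤ C * ρ ^ t)
    (e : S → ℝ) (he : ∑ s, e s = 0) (t : ℕ) (ht : 1 ≤ t) :
    ∑ s, |Matrix.vecMul e (P ^ t) s| ≤ (∑ s, |e s|) * (C * ρ ^ t) := by
  set M := ∑ s, |e s| with hM
  rcases eq_or_lt_of_le (show (0:ℝ) ≤ M from Finset.sum_nonneg fun s _ => abs_nonneg _) with h0 | hMpos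
  · have he0 : ∀ s, e s = 0 := by
      intro s
      have h1 : |e s| ≤ M :=
        Finset.single_le_sum (f := fun s => |e s|) (fun s _ => abs_nonneg _) (Finset.mem_univ s)
      have h2 : |e s| ≤ 0 := h0 ▸ h1
      exact abs_eq_zero.mp (le_antisymm h2 (abs_nonneg _))
    have hv : ∀ s, Matrix.vecMul e (P ^ t) s = 0 := by
      intro s; simp [Matrix.vecMul, dotProduct, he0]
    simp only [hv, abs_zero, Finset.sum_const_zero]
    rw [← h0, zero_mul]
  · set m := M / 2 with hm
    have hmpos : 0 < m := by positivity
    set ep := fun s => max (e s) 0 with hep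
    set en := fun s => max (-e s) 0 with hen
    have habs : ∀ s, ep s + en s = |e s| := by
      intro s
      rcases le_total 0 (e s) with h | h
      · simp [hep, hen, max_eq_left h, max_eq_right (neg_nonpos.mpr h), abs_of_nonneg h]
      · simp [hep, hen, max_eq_right h, max_eq_left (neg_nonneg.mpr h), abs_of_nonpos h]
    have hdiff : ∀ s, ep s - en s = e s := by
      intro s
      rcases le_total 0 (e s) with h | h
      · simp [hep, hen, max_eq_left h, max_eq_right (neg_nonpos.mpr h)]
      · simp [hep, hen, max_eq_right h, max_eq_left (neg_nonneg.mpr h)]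
    have hsum_add : ∑ s, ep s + ∑ s, en s = M := by
      rw [← Finset.sum_add_distrib]; simp [habs, hM]
    have hsum_sub : ∑ s, ep s - ∑ s, en s = 0 := by
      rw [← Finset.sum_sub_distrib]; simp only [hdiff]; exact he
    have hsp : ∑ s, ep s = m := by rw [hm]; linarith
    have hsn : ∑ s, en s = m := by rw [hm]; linarith
    set lp := fun s => ep s / m with hlp
    set ln := fun s => en s / m with hln
    have hlp0 : ∀ s, 0 ≤ lp s := fun s => div_nonneg (le_max_right _ _) hmpos.le
    have hln0 : ∀ s, 0 ≤ ln s := fun s => div_nonneg (le_max_right _ _) hmpos.le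
    have hlp1 : ∑ s, lp s = 1 := by
      simp only [hlp, ← Finset.sum_div, hsp]; field_simp
    have hln1 : ∑ s, ln s = 1 := by
      simp only [hln, ← Finset.sum_div, hsn]; field_simp
    have hdecomp : ∀ s, Matrix.vecMul e (P ^ t) s
        = m * (Matrix.vecMul lp (P ^ t) s - μ s) - m * (Matrix.vecMul ln (P ^ t) s - μ s) := by
      intro s
      simp only [Matrix.vecMul, dotProduct]
      have hei : ∀ i, e i = m * lp i - m * ln i := by
        intro i; rw [hlp, hln]; field_simp; linarith [hdiff i]
      simp only [hei, sub_mul, Finset.sum_sub_distrib, mul_assoc, ← Finset.mul_sum]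
      ring
    calc ∑ s, |Matrix.vecMul e (P ^ t) s|
        ≤ ∑ s, (m * |Matrix.vecMul lp (P ^ t) s - μ s| + m * |Matrix.vecMul ln (P ^ t) s - μ s|) := by
          refine Finset.sum_le_sum fun s _ => ?_
          rw [hdecomp s]
          refine (abs_sub _ _).trans ?_
          rw [abs_mul, abs_mul, abs_of_nonneg hmpos.le]
      _ = m * (∑ s, |Matrix.vecMul lp (P ^ t) s - μ s|) + m * (∑ s, |Matrix.vecMul ln (P ^ t) s - μ s|) := by
          rw [Finset.sum_add_distrib, Finset.mul_sum, Finset.mul_sum]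
      _ ≤ m * (C * ρ ^ t) + m * (C * ρ ^ t) := by
          have h1 := hmix lp hlp0 hlp1 t ht
          have h2 := hmix ln hln0 hln1 t ht
          gcongr
      _ = M * (C * ρ ^ t) := by rw [hm]; ring

/-- Lemma 6 (consrange) in finite-matrix form: if the true matrix `P` and an optimistic
matrix `Q` both lie within ℓ₁ radius `δ s` of the estimate `P̂` on each row `s`, `μ, ν`
are stationary distributions of `P, Q`, and `P` is geometrically ergodic with constants
`C ≥ 1`, `0 < ρ < 1`, then for every `f : S → [0,1]`,
`|E_μ f − E_ν f| ≤ 2 (n̂ + C ρ^n̂/(1−ρ)) max_s δ s` where `n̂ = ⌈log C / log (1/ρ)⌉`. -/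
theorem stmt6 {S : Type*} [Fintype S] [DecidableEq S] [Nonempty S]
    (P Q Phat : Matrix S S ℝ) (μ ν : S → ℝ) (δ : S → ℝ) (C ρ : ℝ)
    (hP0 : ∀ s s', 0 ≤ P s s') (hP1 : ∀ s, ∑ s', P s s' = 1)
    (hQ0 : ∀ s s', 0 ≤ Q s s') (hQ1 : ∀ s, ∑ s', Q s s' = 1)
    (hPhat0 : ∀ s s', 0 ≤ Phat s s') (hPhat1 : ∀ s, ∑ s', Phat s s' = 1)
    (hμ0 : ∀ s, 0 ≤ μ s) (hμ1 : ∑ s, μ s = 1) (hμP : Matrix.vecMul μ P = μ)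
    (hν0 : ∀ s, 0 ≤ ν s) (hν1 : ∑ s, ν s = 1) (hνQ : Matrix.vecMul ν Q = ν)
    (hδ0 : ∀ s, 0 ≤ δ s)
    (hPδ : ∀ s, ∑ s', |P s s' - Phat s s'| ≤ δ s)
    (hQδ : ∀ s, ∑ s', |Q s s' - Phat s s'| ≤ δ s)
    (hC : 1 ≤ C) (hρ0 : 0 < ρ) (hρ1 : ρ < 1)
    (hmix : ∀ l : S → ℝ, (∀ s, 0 ≤ l s) → ∑ s, l s = 1 →
      ∀ t : ℕ, 1 ≤ t → ∑ s, |Matrix.vecMul l (P ^ t) s - μ s| ≤ C * ρ ^ t) :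
    ∀ f : S → ℝ, (∀ s, 0 ≤ f s ∧ f s ≤ 1) →
      |∑ s, μ s * f s - ∑ s, ν s * f s| ≤
        2 * ((⌈Real.log C / Real.log (1 / ρ)⌉ : ℝ)
            + C * ρ ^ (⌈Real.log C / Real.log (1 / ρ)⌉ : ℤ) / (1 - ρ))
          * Finset.univ.sup' Finset.univ_nonempty δ := by
  intro f hf
  set D := Finset.univ.sup' Finset.univ_nonempty δ with hD
  have hδD : ∀ s, δ s ≤ D := fun s => Finset.le_sup' δ (Finset.mem_univ s)
  have hD0 : 0 ≤ D := le_trans (hδ0 (Classical.arbitrary S)) (hδD _)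
  have hC0 : (0:ℝ) < C := lt_of_lt_of_le one_pos hC
  -- n̂ and N
  set nh := ⌈Real.log C / Real.log (1 / ρ)⌉ with hnh
  have hlog : 0 ≤ Real.log (1 / ρ) :=
    Real.log_nonneg (by rw [le_div_iff₀ hρ0]; linarith)
  have hnh0 : 0 ≤ nh := Int.ceil_nonneg (div_nonneg (Real.log_nonneg hC) hlog)
  set N := nh.toNat with hN
  have hnhN : (nh : ℝ) = (N : ℝ) := by
    rw [hN]; exact_mod_cast (Int.toNat_of_nonneg hnh0).symm
  have hzpow : ρ ^ nh = ρ ^ N := by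
    rw [hN, ← Int.toNat_of_nonneg hnh0, zpow_natCast, Int.toNat_natCast]
  rw [hnhN, hzpow]
  -- the perturbation vector e
  set e := fun s' => ν s' - Matrix.vecMul ν P s' with he
  have hesum : ∑ s, e s = 0 := by
    simp only [he, Finset.sum_sub_distrib, hν1, vecMul_sum_eq ν P hP1, sub_self]
  have heabs : ∑ s, |e s| ≤ 2 * D := by
    have step : ∀ s', |e s'| ≤ ∑ s, ν s * |Q s s' - P s s'| := by
      intro s'
      have : e s' = ∑ s, ν s * (Q s s' - P s s') := by
        rw [he]
        simp only
        rw [show ν s' = Matrix.vecMul ν Q s' from (congrFun hνQ s').symm]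
        simp only [Matrix.vecMul, dotProduct, ← Finset.sum_sub_distrib]
        exact Finset.sum_congr rfl fun s _ => by ring
      rw [this]
      refine (Finset.abs_sum_le_sum_abs _ _).trans (le_of_eq ?_)
      exact Finset.sum_congr rfl fun s _ => by
        rw [abs_mul, abs_of_nonneg (hν0 s)]
    calc ∑ s', |e s'| ≤ ∑ s', ∑ s, ν s * |Q s s' - P s s'| :=
          Finset.sum_le_sum fun s' _ => step s'
      _ = ∑ s, ν s * ∑ s', |Q s s' - P s s'| := by
          rw [Finset.sum_comm]
          exact Finset.sum_congr rfl fun s _ => by rw [Finset.mul_sum]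
      _ ≤ ∑ s, ν s * (2 * D) := by
          refine Finset.sum_le_sum fun s _ => ?_
          refine mul_le_mul_of_nonneg_left ?_ (hν0 s)
          calc ∑ s', |Q s s' - P s s'|
              ≤ ∑ s', (|Q s s' - Phat s s'| + |P s s' - Phat s s'|) := by
                refine Finset.sum_le_sum fun s' _ => ?_
                have : Q s s' - P s s' = (Q s s' - Phat s s') - (P s s' - Phat s s') := by ring
                rw [this]
                exact abs_sub _ _
            _ = (∑ s', |Q s s' - Phat s s'|) + (∑ s', |P s s' - Phat s s'|) :=
                Finset.sum_add_distrib
            _ ≤ δ s + δ s := add_le_add (hQδ s) (hPδ s)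
            _ ≤ 2 * D := by have := hδD s; linarith
      _ = 2 * D := by rw [← Finset.sum_mul, hν1, one_mul]
  -- telescoping
  have htel : ∀ T : ℕ, ∀ s, ν s - Matrix.vecMul ν (P ^ T) s
      = ∑ t ∈ Finset.range T, Matrix.vecMul e (P ^ t) s := by
    intro T
    induction T with
    | zero => intro s; simp [Matrix.vecMul_one]
    | succ T ih =>
      intro s
      rw [Finset.sum_range_succ, ← ih s]
      have key : Matrix.vecMul e (P ^ T) s
          = Matrix.vecMul ν (P ^ T) s - Matrix.vecMul ν (P ^ (T + 1)) s := by
        have h2 : Matrix.vecMul ν (P ^ (T+1)) s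
            = Matrix.vecMul (Matrix.vecMul ν P) (P ^ T) s := by
          rw [Matrix.vecMul_vecMul, ← pow_succ']
        rw [h2]
        simp only [he, Matrix.vecMul, dotProduct, ← Finset.sum_sub_distrib]
        exact Finset.sum_congr rfl fun i _ => by ring
      rw [key]; ring
  -- per-term bounds
  set b := fun t : ℕ => ∑ s, Matrix.vecMul e (P ^ t) s * f s with hb
  have habs_b : ∀ t, |b t| ≤ ∑ s, |Matrix.vecMul e (P ^ t) s| := by
    intro t
    refine (Finset.abs_sum_le_sum_abs _ _).trans ?_
    refine Finset.sum_le_sum fun s _ => ?_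
    rw [abs_mul]
    refine mul_le_of_le_one_right (abs_nonneg _) ?_
    rw [abs_le]; exact ⟨by linarith [(hf s).1], (hf s).2⟩
  have hb1 : ∀ t, |b t| ≤ 2 * D := by
    intro t
    refine (habs_b t).trans ?_
    refine (vecMul_l1 e (P ^ t) (stoch_pow P hP0 hP1 t).1 (stoch_pow P hP0 hP1 t).2).trans heabs
  have hb2 : ∀ t, |b t| ≤ 2 * D * (C * ρ ^ t) := by
    intro t
    rcases Nat.eq_zero_or_pos t with rfl | ht
    · calc |b 0| ≤ 2 * D := hb1 0
        _ ≤ 2 * D * (C * ρ ^ 0) := by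
            rw [pow_zero, mul_one]
            nlinarith
    · refine (habs_b t).trans ?_
      refine (signed_mix P μ C ρ hmix e hesum t ht).trans ?_
      have : 0 ≤ C * ρ ^ t := by positivity
      nlinarith [heabs]
  -- geometric sum bound
  have hgeom : ∀ K : ℕ, ∑ i ∈ Finset.range K, ρ ^ i ≤ 1 / (1 - ρ) := by
    intro K
    rw [geom_sum_eq (ne_of_lt hρ1)]
    rw [div_le_iff_of_neg (by linarith : ρ - 1 < 0)]
    have h4 : (1:ℝ) / (1 - ρ) * (ρ - 1) = -1 := by
      rw [div_mul_eq_mul_div, one_mul, div_eq_iff (by linarith : (1:ℝ) - ρ ≠ 0)]; ring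
    rw [h4]
    have := pow_nonneg hρ0.le K
    linarith
  -- epsilon argument
  refine le_of_forall_pos_le_add ?_
  intro ε hε
  obtain ⟨n₀, hn₀⟩ := exists_pow_lt_of_lt_one (show (0:ℝ) < ε / C by positivity) hρ1
  set T := max (max n₀ N) 1 with hT
  have hT1 : 1 ≤ T := le_max_right _ _
  have hTN : N ≤ T := le_trans (le_max_right _ _) (le_max_left _ _)
  have hTn₀ : n₀ ≤ T := le_trans (le_max_left _ _) (le_max_left _ _)
  have hρT : C * ρ ^ T ≤ ε := by
    have h5 : ρ ^ T ≤ ρ ^ n₀ := pow_le_pow_of_le_one hρ0.le hρ1.le hTn₀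
    have h6 : ρ ^ T < ε / C := lt_of_le_of_lt h5 hn₀
    rw [mul_comm, ← le_div_iff₀ hC0]
    exact h6.le
  -- main estimate
  have hsplit : |∑ s, μ s * f s - ∑ s, ν s * f s|
      ≤ |∑ s, μ s * f s - ∑ s, Matrix.vecMul ν (P ^ T) s * f s|
        + |∑ s, Matrix.vecMul ν (P ^ T) s * f s - ∑ s, ν s * f s| := by
    exact abs_sub_le _ _ _
  have hfirst : |∑ s, μ s * f s - ∑ s, Matrix.vecMul ν (P ^ T) s * f s| ≤ C * ρ ^ T := by
    rw [← Finset.sum_sub_distrib]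
    refine (Finset.abs_sum_le_sum_abs _ _).trans ?_
    calc ∑ s, |μ s * f s - Matrix.vecMul ν (P ^ T) s * f s|
        ≤ ∑ s, |Matrix.vecMul ν (P ^ T) s - μ s| := by
          refine Finset.sum_le_sum fun s _ => ?_
          have : μ s * f s - Matrix.vecMul ν (P ^ T) s * f s
              = -((Matrix.vecMul ν (P ^ T) s - μ s) * f s) := by ring
          rw [this, abs_neg, abs_mul]
          refine mul_le_of_le_one_right (abs_nonneg _) ?_
          rw [abs_le]; exact ⟨by linarith [(hf s).1], (hf s).2⟩
      _ ≤ C * ρ ^ T := hmix ν hν0 hν1 T hT1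
  have hsecond : |∑ s, Matrix.vecMul ν (P ^ T) s * f s - ∑ s, ν s * f s|
      ≤ ∑ t ∈ Finset.range T, |b t| := by
    have hrw : ∑ s, Matrix.vecMul ν (P ^ T) s * f s - ∑ s, ν s * f s
        = -(∑ t ∈ Finset.range T, b t) := by
      rw [← Finset.sum_sub_distrib]
      have : ∀ s, Matrix.vecMul ν (P ^ T) s * f s - ν s * f s
          = -((ν s - Matrix.vecMul ν (P ^ T) s) * f s) := fun s => by ring
      simp only [this, htel T, Finset.sum_neg_distrib]
      congr 1
      rw [Finset.sum_comm]
      exact Finset.sum_congr rfl fun t _ => by rw [Finset.sum_mul]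
    rw [hrw, abs_neg]
    exact Finset.abs_sum_le_sum_abs _ _
  have hsum_b : ∑ t ∈ Finset.range T, |b t| ≤ 2 * D * N + 2 * D * (C * ρ ^ N / (1 - ρ)) := by
    rw [Finset.range_eq_Ico, ← Finset.sum_Ico_consecutive _ (Nat.zero_le N) hTN]
    refine add_le_add ?_ ?_
    · rw [← Finset.range_eq_Ico]
      calc ∑ t ∈ Finset.range N, |b t| ≤ ∑ t ∈ Finset.range N, 2 * D :=
            Finset.sum_le_sum fun t _ => hb1 t
        _ = 2 * D * N := by rw [Finset.sum_const, Finset.card_range]; ring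
    · calc ∑ t ∈ Finset.Ico N T, |b t| ≤ ∑ t ∈ Finset.Ico N T, 2 * D * (C * ρ ^ t) :=
            Finset.sum_le_sum fun t _ => hb2 t
        _ = 2 * D * C * ρ ^ N * ∑ i ∈ Finset.range (T - N), ρ ^ i := by
            rw [Finset.sum_Ico_eq_sum_range, Finset.mul_sum]
            exact Finset.sum_congr rfl fun i _ => by rw [pow_add]; ring
        _ ≤ 2 * D * (C * ρ ^ N / (1 - ρ)) := by
            have h7 := hgeom (T - N)
            have h8 : 0 ≤ 2 * D * C * ρ ^ N := by positivity
            calc 2 * D * C * ρ ^ N * ∑ i ∈ Finset.range (T - N), ρ ^ i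
                ≤ 2 * D * C * ρ ^ N * (1 / (1 - ρ)) := mul_le_mul_of_nonneg_left h7 h8
              _ = 2 * D * (C * ρ ^ N / (1 - ρ)) := by ring
  calc |∑ s, μ s * f s - ∑ s, ν s * f s|
      ≤ C * ρ ^ T + ∑ t ∈ Finset.range T, |b t| :=
        hsplit.trans (add_le_add hfirst hsecond)
    _ ≤ ε + (2 * D * N + 2 * D * (C * ρ ^ N / (1 - ρ))) := add_le_add hρT hsum_b
    _ = 2 * ((N : ℝ) + C * ρ ^ N / (1 - ρ)) * D + ε := by ring
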